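/- Let {ε_1, …, ε_n} and {β_1, …, β_n} be two orthonormal bases of ℂⁿ. On the real vector space of Hermitian n×n complex matrices, consider the real-linear functionals L_i(ρ) = tr(ρ |ε_i⟩⟨ε_i|) and M_i(ρ) = tr(ρ |β_i⟩⟨β_i|) for i = 1, …, n. Suppose the dimension of the real span of {L_1, …, L_n, M_1, …, M_n} equals n + 1 (exactly one more than the dimension n of the span of {L_1, …, L_n}). Then there exist indices r ≠ s and j ≠ k such that β_r and β_s lie in the two-dimensional complex subspace spanned by ε_j and ε_k, all four inner products ⟨ε_j, β_r⟩, ⟨ε_k, β_r⟩, ⟨ε_j, β_s⟩, ⟨ε_k, β_s⟩ are nonzero, and the remaining vectors {β_l : l ≠ r, s} coincide, up to multiplication by complex scalars of modulus 1, with a permutation of {ε_l : l ≠ j, k}. -/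

import Mathlib

open Matrix Module Submodule Set LinearMap Finset

section helpers


/-- The rank-one orthogonal projection `|v⟩⟨v|` onto the line spanned by `v`. -/
def proj {n : ℕ} (v : Fin n → ℂ) : Matrix (Fin n) (Fin n) ℂ :=
  Matrix.vecMulVec v (star v)

/-- The real-linear functional `ρ ↦ tr(ρ P)` on the real vector space of Hermitian
`n × n` complex matrices (for Hermitian `P` the trace is real, so we take its real
part). -/
noncomputable def measFun {n : ℕ} (P : Matrix (Fin n) (Fin n) ℂ) :
    selfAdjoint (Matrix (Fin n) (Fin n) ℂ) →ₗ[ℝ] ℝ where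
  toFun ρ := ((ρ : Matrix (Fin n) (Fin n) ℂ) * P).trace.re
  map_add' ρ σ := by
    simp [add_mul, Matrix.trace_add]
  map_smul' r ρ := by
    simp [Matrix.smul_mul, Matrix.trace_smul, Complex.real_smul]

namespace RankInc

variable {n : ℕ}

lemma proj_apply (v : Fin n → ℂ) (j k : Fin n) :
    proj v j k = v j * (starRingEnd ℂ) (v k) := rfl

lemma proj_isSelfAdjoint (v : Fin n → ℂ) : IsSelfAdjoint (proj v) := by
  ext j k
  simp only [Matrix.star_apply, proj_apply, RCLike.star_def, _root_.map_mul,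
    Complex.conj_conj]
  ring

/-- `measFun` as an `ℝ`-linear map in `P`. -/
noncomputable def measFunL (n : ℕ) :
    Matrix (Fin n) (Fin n) ℂ →ₗ[ℝ]
      (selfAdjoint (Matrix (Fin n) (Fin n) ℂ) →ₗ[ℝ] ℝ) where
  toFun := measFun
  map_add' P Q := by
    ext ρ
    simp [measFun, mul_add, Matrix.trace_add]
  map_smul' r P := by
    ext ρ
    simp [measFun, Matrix.mul_smul, Matrix.trace_smul, Complex.real_smul]

lemma measFun_eq_zero {M : Matrix (Fin n) (Fin n) ℂ} (hM : IsSelfAdjoint M)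
    (h : measFun M = 0) : M = 0 := by
  have h0 : ((M * M).trace).re = 0 := by
    have := congrArg (fun f => f ⟨M, hM⟩) h
    simpa [measFun] using this
  have hM' : ∀ j k, M k j = (starRingEnd ℂ) (M j k) := by
    intro j k
    conv_lhs => rw [← hM]
    rfl
  have htr : ((M * M).trace).re = ∑ j, ∑ k, Complex.normSq (M j k) := by
    rw [Matrix.trace]
    simp only [Matrix.diag_apply, Matrix.mul_apply]
    rw [Complex.re_sum]
    refine Finset.sum_congr rfl fun j _ => ?_
    rw [Complex.re_sum]
    refine Finset.sum_congr rfl fun k _ => ?_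
    rw [hM' j k, Complex.mul_conj, Complex.ofReal_re]
  rw [htr] at h0
  ext j k
  have hnn : ∀ p ∈ Finset.univ, (0:ℝ) ≤ ∑ k, Complex.normSq (M p k) :=
    fun p _ => Finset.sum_nonneg fun k _ => Complex.normSq_nonneg _
  have h1 := (Finset.sum_eq_zero_iff_of_nonneg hnn).mp h0 j (Finset.mem_univ j)
  have h2 := (Finset.sum_eq_zero_iff_of_nonneg
    (fun p _ => Complex.normSq_nonneg (M j p))).mp h1 k (Finset.mem_univ k)
  simpa using Complex.normSq_eq_zero.mp h2

end RankInc

namespace RankInc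
variable {n : ℕ}

lemma span_selfAdjoint {s : Set (Matrix (Fin n) (Fin n) ℂ)}
    (hs : ∀ M ∈ s, IsSelfAdjoint M) {M} (hM : M ∈ Submodule.span ℝ s) :
    IsSelfAdjoint M := by
  induction hM using Submodule.span_induction with
  | mem x hx => exact hs x hx
  | zero => exact IsSelfAdjoint.zero _
  | add x y _ _ hx hy => exact hx.add hy
  | smul r x _ hx =>
      rw [_root_.IsSelfAdjoint, star_smul, star_trivial]
      rw [_root_.IsSelfAdjoint] at hx
      rw [hx]

lemma finrank_span_measFun {s : Set (Matrix (Fin n) (Fin n) ℂ)}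
    (hs : ∀ M ∈ s, IsSelfAdjoint M) :
    finrank ℝ (Submodule.span ℝ ((measFunL n) '' s)) =
      finrank ℝ (Submodule.span ℝ s) := by
  set S := Submodule.span ℝ s with hS
  have hinj : Function.Injective ((measFunL n).domRestrict S) := by
    rw [← LinearMap.ker_eq_bot, eq_bot_iff]
    rintro ⟨M, hM⟩ hker
    have h0 : measFun M = 0 := hker
    have : M = 0 := measFun_eq_zero (span_selfAdjoint hs hM) h0
    have : (⟨M, hM⟩ : S) = 0 := by
      apply Subtype.ext
      simpa using this
    simpa [Submodule.mem_bot] using this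
  have h := LinearMap.finrank_range_of_inj hinj
  rw [LinearMap.range_domRestrict, hS, Submodule.map_span] at h
  exact h

/-- Conjugation `M ↦ Uᴴ * M * U` as an `ℝ`-linear map. -/
noncomputable def conjL (U : Matrix (Fin n) (Fin n) ℂ) :
    Matrix (Fin n) (Fin n) ℂ →ₗ[ℝ] Matrix (Fin n) (Fin n) ℂ where
  toFun M := Uᴴ * M * U
  map_add' M N := by noncomm_ring
  map_smul' r M := by
    simp [Matrix.mul_smul, Matrix.smul_mul]

lemma conjL_apply (U M : Matrix (Fin n) (Fin n) ℂ) : conjL U M = Uᴴ * M * U := rfl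

/-- Conjugation by a unitary as an `ℝ`-linear equivalence. -/
noncomputable def conjEquiv {U : Matrix (Fin n) (Fin n) ℂ} (hU : Uᴴ * U = 1) :
    Matrix (Fin n) (Fin n) ℂ ≃ₗ[ℝ] Matrix (Fin n) (Fin n) ℂ :=
  LinearEquiv.ofLinear (conjL U) (conjL Uᴴ)
    (by
      have hU' : U * Uᴴ = 1 := mul_eq_one_comm.mp hU
      ext M : 1
      simp only [LinearMap.comp_apply, conjL_apply, conjTranspose_conjTranspose,
        LinearMap.id_apply]
      calc Uᴴ * (U * M * Uᴴ) * U = (Uᴴ * U) * M * (Uᴴ * U) := by noncomm_ring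
      _ = M := by rw [hU]; simp)
    (by
      have hU' : U * Uᴴ = 1 := mul_eq_one_comm.mp hU
      ext M : 1
      simp only [LinearMap.comp_apply, conjL_apply, conjTranspose_conjTranspose,
        LinearMap.id_apply]
      calc U * (Uᴴ * M * U) * Uᴴ = (U * Uᴴ) * M * (U * Uᴴ) := by noncomm_ring
      _ = M := by rw [hU']; simp)

lemma conjEquiv_apply {U : Matrix (Fin n) (Fin n) ℂ} (hU : Uᴴ * U = 1) (M) :
    conjEquiv hU M = Uᴴ * M * U := rfl

lemma conj_proj (U : Matrix (Fin n) (Fin n) ℂ) (v : Fin n → ℂ) :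
    Uᴴ * proj v * U = proj (Uᴴ *ᵥ v) := by
  ext j k
  simp only [Matrix.mul_apply, proj_apply, Matrix.mulVec, dotProduct,
    conjTranspose_apply, RCLike.star_def, map_sum, _root_.map_mul,
    Complex.conj_conj, Finset.sum_mul, Finset.mul_sum]
  exact Finset.sum_congr rfl fun a _ => Finset.sum_congr rfl fun b _ => by ring

lemma proj_single_apply (i j k : Fin n) :
    proj (Pi.single i 1) j k = if j = i ∧ k = i then 1 else 0 := by
  simp only [proj_apply, Pi.single_apply]
  split_ifs with h h1 h2 <;> simp_all

lemma linearIndependent_projSingle :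
    LinearIndependent ℝ (fun i : Fin n => proj (Pi.single i (1:ℂ))) := by
  rw [Fintype.linearIndependent_iff]
  intro g hg i
  have := congrArg (fun M : Matrix (Fin n) (Fin n) ℂ => M i i) hg
  simp only [Finset.sum_apply, Matrix.sum_apply, Pi.smul_apply, Matrix.smul_apply,
    proj_single_apply, Matrix.zero_apply] at this
  rw [Finset.sum_eq_single i] at this
  · simp at this
    exact_mod_cast this
  · intro b _ hb
    simp [hb.symm]
  · simp

/-- The off-diagonal part, as an `ℝ`-linear map. -/
noncomputable def offd : Matrix (Fin n) (Fin n) ℂ →ₗ[ℝ] Matrix (Fin n) (Fin n) ℂ where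
  toFun M := Matrix.of fun j k => if j = k then 0 else M j k
  map_add' M N := by
    ext j k
    by_cases h : j = k <;> simp [h]
  map_smul' r M := by
    ext j k
    by_cases h : j = k <;> simp [h]

lemma offd_apply (M : Matrix (Fin n) (Fin n) ℂ) (j k : Fin n) :
    offd M j k = if j = k then 0 else M j k := rfl

lemma offd_projSingle (i : Fin n) : offd (proj (Pi.single i (1:ℂ))) = 0 := by
  ext j k
  rw [offd_apply]
  split_ifs with h
  · rfl
  · rw [proj_single_apply]
    have : ¬ (j = i ∧ k = i) := by rintro ⟨rfl, rfl⟩; exact h rfl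
    simp [this]

lemma offd_one : offd (1 : Matrix (Fin n) (Fin n) ℂ) = 0 := by
  ext j k
  rw [offd_apply]
  split_ifs with h
  · rfl
  · simp [Matrix.one_apply, h]

lemma sum_proj_eq_one (γ : Fin n → (Fin n → ℂ))
    (hγ : ∀ i j, dotProduct (star (γ i)) (γ j) = if i = j then 1 else 0) :
    ∑ i, proj (γ i) = 1 := by
  set G : Matrix (Fin n) (Fin n) ℂ := Matrix.of (fun j i => γ i j) with hG
  have hGG : Gᴴ * G = 1 := by
    ext i k
    have := hγ i k
    simp only [Matrix.mul_apply, conjTranspose_apply, hG, Matrix.of_apply,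
      RCLike.star_def, Matrix.one_apply]
    rw [← this]
    simp [dotProduct]
  have hGG' : G * Gᴴ = 1 := mul_eq_one_comm.mp hGG
  calc ∑ i, proj (γ i) = G * Gᴴ := by
        ext j k
        simp [Matrix.sum_apply, proj_apply, Matrix.mul_apply, hG,
          conjTranspose_apply, RCLike.star_def]
    _ = 1 := hGG'

lemma single_support {v : Fin n → ℂ} (hv : dotProduct (star v) v = 1)
    (h : ∀ j k, j ≠ k → v j * (starRingEnd ℂ) (v k) = 0) :
    ∃ p c, ‖(c : ℂ)‖ = 1 ∧ v = c • (Pi.single p 1 : Fin n → ℂ) := by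
  have hex : ∃ p, v p ≠ 0 := by
    by_contra hc
    push_neg at hc
    rw [dotProduct] at hv
    simp [hc] at hv
  obtain ⟨p, hp⟩ := hex
  have hz : ∀ k, k ≠ p → v k = 0 := by
    intro k hk
    have := h p k (Ne.symm hk)
    rcases mul_eq_zero.mp this with h1 | h1
    · exact absurd h1 hp
    · simpa using congrArg (starRingEnd ℂ) h1
  have hveq : v = v p • (Pi.single p 1 : Fin n → ℂ) := by
    funext m
    by_cases hm : m = p
    · subst hm; simp
    · rw [hz m hm]; simp [Pi.single_apply, hm]
  refine ⟨p, v p, ?_, hveq⟩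
  have : dotProduct (star v) v = (starRingEnd ℂ) (v p) * v p := by
    rw [dotProduct, Finset.sum_eq_single p]
    · simp
    · intro b _ hb; simp [hz b hb]
    · simp
  rw [this] at hv
  have habs : Complex.normSq (v p) = 1 := by
    have := hv
    rw [mul_comm, Complex.mul_conj] at this
    exact_mod_cast this
  have := Complex.sq_norm (v p)
  rw [habs] at this
  nlinarith [norm_nonneg (v p)]

lemma two_support_dot {j k : Fin n} (hjk : j ≠ k) {v w : Fin n → ℂ}
    (hv : ∀ m, m ≠ j → m ≠ k → v m = 0) (hw : ∀ m, m ≠ j → m ≠ k → w m = 0) :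
    dotProduct (star v) w
      = (starRingEnd ℂ) (v j) * w j + (starRingEnd ℂ) (v k) * w k := by
  rw [dotProduct, ← Finset.sum_subset (Finset.subset_univ {j, k})]
  · rw [Finset.sum_pair hjk]
    simp
  · intro x _ hx
    simp only [Finset.mem_insert, Finset.mem_singleton] at hx
    push_neg at hx
    simp [hv x hx.1 hx.2]

lemma dot_single_left (c : ℂ) (p : Fin n) (w : Fin n → ℂ) :
    dotProduct (star (c • (Pi.single p 1 : Fin n → ℂ))) w
      = (starRingEnd ℂ) c * w p := by
  rw [dotProduct, Finset.sum_eq_single p]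
  · simp
  · intro b _ hb
    simp [Pi.single_apply, hb.symm]
  · simp

lemma card_ne_pair {a b : Fin n} (hab : a ≠ b) :
    Fintype.card {l : Fin n // l ≠ a ∧ l ≠ b} = n - 2 := by
  rw [Fintype.card_subtype]
  have : (Finset.univ.filter fun l : Fin n => l ≠ a ∧ l ≠ b)
      = Finset.univ \ {a, b} := by
    ext l
    simp [not_or]
  rw [this, Finset.card_sdiff_of_subset (Finset.subset_univ _), Finset.card_pair hab]
  simp

lemma core (γ : Fin n → (Fin n → ℂ))
    (hγ : ∀ i j, dotProduct (star (γ i)) (γ j) = if i = j then 1 else 0)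
    (hrank : finrank ℝ (Submodule.span ℝ
      (Set.range (fun i => proj ((Pi.single i 1 : Fin n → ℂ))) ∪
       Set.range (fun i => proj (γ i)))) = n + 1) :
    ∃ r s : Fin n, r ≠ s ∧ ∃ j k : Fin n, j ≠ k ∧
      (∀ m, m ≠ j → m ≠ k → γ r m = 0) ∧
      (∀ m, m ≠ j → m ≠ k → γ s m = 0) ∧
      γ r j ≠ 0 ∧ γ r k ≠ 0 ∧ γ s j ≠ 0 ∧ γ s k ≠ 0 ∧
      ∃ σ : {l : Fin n // l ≠ r ∧ l ≠ s} ≃ {l : Fin n // l ≠ j ∧ l ≠ k},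
        ∀ l, ∃ c : ℂ, ‖c‖ = 1 ∧
          γ l.1 = c • (Pi.single ((σ l).1) 1 : Fin n → ℂ) := by
  classical
  set E : Fin n → Matrix (Fin n) (Fin n) ℂ :=
    fun i => proj ((Pi.single i 1 : Fin n → ℂ)) with hE
  set Q : Fin n → Matrix (Fin n) (Fin n) ℂ := fun i => proj (γ i) with hQdef
  set S : Submodule ℝ (Matrix (Fin n) (Fin n) ℂ) :=
    Submodule.span ℝ (Set.range E ∪ Set.range Q) with hSdef
  set D : Submodule ℝ (Matrix (Fin n) (Fin n) ℂ) :=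
    Submodule.span ℝ (Set.range E) with hDdef
  have hD : finrank ℝ D = n := by
    rw [hDdef, finrank_span_eq_card (linearIndependent_projSingle (n := n))]
    simp
  have hDS : D ≤ S := Submodule.span_mono Set.subset_union_left
  have hDker : D ≤ LinearMap.ker offd := by
    rw [hDdef, Submodule.span_le]
    rintro _ ⟨i, rfl⟩
    exact LinearMap.mem_ker.mpr (offd_projSingle i)
  -- the off-diagonal parts span at most one dimension
  have hoff : finrank ℝ (Submodule.span ℝ (Set.range fun i => offd (Q i))) ≤ 1 := by
    have hadd := LinearMap.finrank_range_add_finrank_ker ((offd (n := n)).domRestrict S)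
    have hkerge : n ≤ finrank ℝ (LinearMap.ker ((offd (n := n)).domRestrict S)) := by
      have e := Submodule.comapSubtypeEquivOfLe hDS
      have hle : D.comap S.subtype ≤ LinearMap.ker ((offd (n := n)).domRestrict S) := by
        intro x hx
        rw [Submodule.mem_comap] at hx
        exact LinearMap.mem_ker.mpr (LinearMap.mem_ker.mp (hDker hx))
      calc n = finrank ℝ (D.comap S.subtype) := by rw [e.finrank_eq, hD]
        _ ≤ _ := Submodule.finrank_mono hle
    have hrange : finrank ℝ (Submodule.map offd S) ≤ 1 := by
      rw [← LinearMap.range_domRestrict]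
      omega
    refine le_trans (Submodule.finrank_mono ?_) hrange
    rw [Submodule.span_le]
    rintro _ ⟨i, rfl⟩
    exact Submodule.mem_map_of_mem (Submodule.subset_span (Or.inr ⟨i, rfl⟩))
  -- some `Q i` has nonzero off-diagonal part
  have hex : ∃ i0, offd (Q i0) ≠ 0 := by
    by_contra hc
    push_neg at hc
    have hQD : ∀ i, Q i ∈ D := by
      intro i
      have hqe : Q i = ∑ j, (Complex.normSq (γ i j) : ℝ) • E j := by
        ext a b
        rw [Matrix.sum_apply]
        simp only [Matrix.smul_apply, hE, proj_single_apply]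
        by_cases hab : a = b
        · subst hab
          rw [Finset.sum_eq_single a (fun j _ hj => by simp [Ne.symm hj]) (by simp)]
          simp [hQdef, proj_apply, Complex.real_smul, Complex.mul_conj]
        · have h0 : offd (Q i) a b = 0 := by rw [hc]; rfl
          rw [offd_apply, if_neg hab] at h0
          rw [h0, Finset.sum_eq_zero]
          intro j _
          have : ¬(a = j ∧ b = j) := by rintro ⟨rfl, rfl⟩; exact hab rfl
          simp [this]
      rw [hqe]
      exact Submodule.sum_mem _ fun j _ =>
        Submodule.smul_mem _ _ (Submodule.subset_span ⟨j, rfl⟩)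
    have hSD : S = D := by
      refine le_antisymm ?_ hDS
      rw [hSdef, Submodule.span_le]
      rintro x (⟨i, rfl⟩ | ⟨i, rfl⟩)
      · exact Submodule.subset_span ⟨i, rfl⟩
      · exact hQD i
    rw [hSD, hD] at hrank
    omega
  obtain ⟨i0, hO⟩ := hex
  -- every off-diagonal part is a real multiple of that of `Q i0`
  have htt : ∀ i, ∃ t : ℝ, offd (Q i) = t • offd (Q i0) := by
    have heq : Submodule.span ℝ {offd (Q i0)}
        = Submodule.span ℝ (Set.range fun i => offd (Q i)) := by
      apply Submodule.eq_of_le_of_finrank_le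
      · rw [Submodule.span_le, Set.singleton_subset_iff]
        exact Submodule.subset_span ⟨i0, rfl⟩
      · rw [finrank_span_singleton hO]
        exact hoff
    intro i
    have hmem : offd (Q i) ∈ Submodule.span ℝ {offd (Q i0)} := by
      rw [heq]; exact Submodule.subset_span ⟨i, rfl⟩
    obtain ⟨tt, htt⟩ := Submodule.mem_span_singleton.mp hmem
    exact ⟨tt, htt.symm⟩
  choose t htt using htt
  have ht0 : t i0 = 1 := by
    have h1 : (t i0 - 1) • offd (Q i0) = 0 := by
      rw [sub_smul, one_smul, ← htt i0, sub_self]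
    rcases smul_eq_zero.mp h1 with h | h
    · linarith [sub_eq_zero.mp h]
    · exact absurd h hO
  -- the sum of all t is zero
  have hsum : ∑ i, t i = 0 := by
    have h1 : ∑ i, offd (Q i) = 0 := by
      rw [← map_sum]
      have hq1 : ∑ i, Q i = 1 := sum_proj_eq_one γ hγ
      rw [hq1, offd_one]
    have h2 : ∑ i, offd (Q i) = (∑ i, t i) • offd (Q i0) := by
      rw [Finset.sum_congr rfl (fun i _ => htt i), ← Finset.sum_smul]
    rw [h2] at h1
    rcases smul_eq_zero.mp h1 with h | h
    · exact h
    · exact absurd h hO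
  -- the key entrywise relation
  have hkey : ∀ i j k, j ≠ k →
      γ i j * (starRingEnd ℂ) (γ i k)
        = (t i : ℂ) * (γ i0 j * (starRingEnd ℂ) (γ i0 k)) := by
    intro i j k hjk
    have h1 : offd (Q i) j k = (t i • offd (Q i0)) j k := by rw [htt i]
    rw [Matrix.smul_apply, offd_apply, offd_apply, if_neg hjk, if_neg hjk] at h1
    rw [hQdef] at h1
    simp only [proj_apply] at h1
    rw [h1, Complex.real_smul]
  -- a nonzero off-diagonal entry of `offd (Q i0)`
  obtain ⟨j0, k0, hjk0, hOjk⟩ :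
      ∃ j0 k0, j0 ≠ k0 ∧ γ i0 j0 * (starRingEnd ℂ) (γ i0 k0) ≠ 0 := by
    by_contra hcon
    push_neg at hcon
    apply hO
    ext j k
    rw [offd_apply, Matrix.zero_apply]
    split_ifs with h
    · rfl
    · rw [hQdef]
      simpa only [proj_apply] using hcon j k h
  have ha0 : γ i0 j0 ≠ 0 := fun h => hOjk (by rw [h, zero_mul])
  have hb0 : γ i0 k0 ≠ 0 := fun h => hOjk (by rw [h]; simp)
  have hnz : ∀ i, t i ≠ 0 → γ i j0 ≠ 0 ∧ γ i k0 ≠ 0 := by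
    intro i hti
    have h := hkey i j0 k0 hjk0
    have hne : γ i j0 * (starRingEnd ℂ) (γ i k0) ≠ 0 := by
      rw [h]
      exact mul_ne_zero (Complex.ofReal_ne_zero.mpr hti) hOjk
    obtain ⟨h1, h2⟩ := mul_ne_zero_iff.mp hne
    exact ⟨h1, fun hh => h2 (by rw [hh, map_zero])⟩
  -- some index with negative coefficient
  obtain ⟨i1, hti1⟩ : ∃ i1, t i1 < 0 := by
    by_contra hcon
    push_neg at hcon
    have h1 : t i0 ≤ ∑ i, t i := Finset.single_le_sum (fun i _ => hcon i) (Finset.mem_univ i0)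
    rw [hsum, ht0] at h1
    linarith
  have hti1' : t i1 ≠ 0 := ne_of_lt hti1
  have hne01 : i1 ≠ i0 := fun h => by rw [h, ht0] at hti1; linarith
  -- the support of `γ i0` is exactly `{j0, k0}`
  have hsupp0 : ∀ m, m ≠ j0 → m ≠ k0 → γ i0 m = 0 := by
    intro m hm1 hm2
    by_contra hm
    have A := hkey i1 j0 m (fun h => hm1 h.symm)
    have B := hkey i1 m k0 hm2
    have C := hkey i1 j0 k0 hjk0
    have hTX : (t i1 : ℂ) * (γ i0 j0 * (starRingEnd ℂ) (γ i0 k0)) ≠ 0 :=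
      mul_ne_zero (Complex.ofReal_ne_zero.mpr hti1') hOjk
    have key : ((t i1 : ℂ) * (γ i0 j0 * (starRingEnd ℂ) (γ i0 k0)))
          * (γ i1 m * (starRingEnd ℂ) (γ i1 m))
        = ((t i1 : ℂ) * (γ i0 j0 * (starRingEnd ℂ) (γ i0 k0)))
          * ((t i1 : ℂ) * (γ i0 m * (starRingEnd ℂ) (γ i0 m))) := by
      calc ((t i1 : ℂ) * (γ i0 j0 * (starRingEnd ℂ) (γ i0 k0)))
            * (γ i1 m * (starRingEnd ℂ) (γ i1 m))
          = (γ i1 j0 * (starRingEnd ℂ) (γ i1 k0)) * (γ i1 m * (starRingEnd ℂ) (γ i1 m)) := by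
            rw [← C]
        _ = (γ i1 j0 * (starRingEnd ℂ) (γ i1 m)) * (γ i1 m * (starRingEnd ℂ) (γ i1 k0)) := by
            ring
        _ = ((t i1 : ℂ) * (γ i0 j0 * (starRingEnd ℂ) (γ i0 m)))
            * ((t i1 : ℂ) * (γ i0 m * (starRingEnd ℂ) (γ i0 k0))) := by rw [A, B]
        _ = _ := by ring
    have h2 := mul_left_cancel₀ hTX key
    rw [Complex.mul_conj, Complex.mul_conj] at h2
    have h3 : Complex.normSq (γ i1 m) = t i1 * Complex.normSq (γ i0 m) := by
      exact_mod_cast h2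
    nlinarith [Complex.normSq_nonneg (γ i1 m), Complex.normSq_pos.mpr hm, hti1]
  -- the support of every `γ i` with `t i ≠ 0` is within `{j0, k0}`
  have hsupp : ∀ i, t i ≠ 0 → ∀ m, m ≠ j0 → m ≠ k0 → γ i m = 0 := by
    intro i hti m hm1 hm2
    have h := hkey i m k0 hm2
    rw [hsupp0 m hm1 hm2, zero_mul, mul_zero] at h
    rcases mul_eq_zero.mp h with h1 | h1
    · exact h1
    · refine absurd ?_ (hnz i hti).2
      have := congrArg (starRingEnd ℂ) h1
      simpa using this
  have ht00 : t i0 ≠ 0 := by rw [ht0]; norm_num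
  -- only `i0` and `i1` have nonzero coefficient
  have hzero : ∀ i, i ≠ i0 → i ≠ i1 → t i = 0 := by
    intro i2 h2a h2b
    by_contra ht2
    obtain ⟨a1n, b1n⟩ := hnz i1 hti1'
    obtain ⟨a2n, b2n⟩ := hnz i2 ht2
    have e01 : (starRingEnd ℂ) (γ i0 j0) * γ i1 j0
        + (starRingEnd ℂ) (γ i0 k0) * γ i1 k0 = 0 := by
      have hzz := hγ i0 i1
      rw [if_neg (Ne.symm hne01)] at hzz
      have hd := two_support_dot hjk0 hsupp0 (hsupp i1 hti1')
      rw [hzz] at hd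
      exact hd.symm
    have e02 : (starRingEnd ℂ) (γ i0 j0) * γ i2 j0
        + (starRingEnd ℂ) (γ i0 k0) * γ i2 k0 = 0 := by
      have hz := hγ i0 i2
      rw [if_neg (Ne.symm h2a)] at hz
      have hd := two_support_dot hjk0 hsupp0 (hsupp i2 ht2)
      rw [hz] at hd
      exact hd.symm
    have e12 : (starRingEnd ℂ) (γ i1 j0) * γ i2 j0
        + (starRingEnd ℂ) (γ i1 k0) * γ i2 k0 = 0 := by
      have hz := hγ i1 i2
      rw [if_neg (Ne.symm h2b)] at hz
      have hd := two_support_dot hjk0 (hsupp i1 hti1') (hsupp i2 ht2)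
      rw [hz] at hd
      exact hd.symm
    have e01' : γ i0 j0 * (starRingEnd ℂ) (γ i1 j0)
        + γ i0 k0 * (starRingEnd ℂ) (γ i1 k0) = 0 := by
      have := congrArg (starRingEnd ℂ) e01
      simpa using this
    have T : (γ i0 j0 * (starRingEnd ℂ) (γ i0 j0)
          + γ i0 k0 * (starRingEnd ℂ) (γ i0 k0))
        * ((starRingEnd ℂ) (γ i1 k0) * γ i2 k0) = 0 := by
      linear_combination (-(starRingEnd ℂ) (γ i0 j0) * γ i2 j0) * e01'
        + (γ i0 k0 * (starRingEnd ℂ) (γ i1 k0)) * e02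
        + (γ i0 j0 * (starRingEnd ℂ) (γ i0 j0)) * e12
    rcases mul_eq_zero.mp T with h1 | h1
    · rw [Complex.mul_conj, Complex.mul_conj] at h1
      have : Complex.normSq (γ i0 j0) + Complex.normSq (γ i0 k0) = 0 := by
        exact_mod_cast h1
      nlinarith [Complex.normSq_pos.mpr ha0, Complex.normSq_nonneg (γ i0 k0)]
    · rcases mul_eq_zero.mp h1 with h2 | h2
      · exact b1n (by simpa using congrArg (starRingEnd ℂ) h2)
      · exact b2n h2
  -- assemble the conclusion
  refine ⟨i0, i1, Ne.symm hne01, j0, k0, hjk0, hsupp0, hsupp i1 hti1',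
    (hnz i0 ht00).1, (hnz i0 ht00).2, (hnz i1 hti1').1, (hnz i1 hti1').2, ?_⟩
  have hps : ∀ l : {l : Fin n // l ≠ i0 ∧ l ≠ i1},
      ∃ p c, ‖(c : ℂ)‖ = 1 ∧ γ l.1 = c • (Pi.single p 1 : Fin n → ℂ) := by
    rintro ⟨l, hl0, hl1⟩
    have htl : t l = 0 := hzero l hl0 hl1
    have hoffl : offd (Q l) = 0 := by rw [htt l, htl, zero_smul]
    apply single_support
    · have h := hγ l l
      rwa [if_pos rfl] at h
    · intro j k hjk
      have h : offd (Q l) j k = 0 := by rw [hoffl]; rfl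
      rw [offd_apply, if_neg hjk, hQdef] at h
      simpa only [proj_apply] using h
  choose p c habs hg using hps
  have hcne : ∀ l, c l ≠ 0 := by
    intro l hl
    have h1 := habs l
    rw [hl] at h1
    simp at h1
  have hpj : ∀ l, p l ≠ j0 := by
    intro l hpl
    have hz := hγ l.1 i0
    rw [if_neg l.2.1, hg l, dot_single_left] at hz
    rcases mul_eq_zero.mp hz with h | h
    · exact hcne l (by simpa using congrArg (starRingEnd ℂ) h)
    · rw [hpl] at h
      exact ha0 h
  have hpk : ∀ l, p l ≠ k0 := by
    intro l hpl
    have hz := hγ l.1 i0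
    rw [if_neg l.2.1, hg l, dot_single_left] at hz
    rcases mul_eq_zero.mp hz with h | h
    · exact hcne l (by simpa using congrArg (starRingEnd ℂ) h)
    · rw [hpl] at h
      exact hb0 h
  let F : {l : Fin n // l ≠ i0 ∧ l ≠ i1} → {l : Fin n // l ≠ j0 ∧ l ≠ k0} :=
    fun l => ⟨p l, hpj l, hpk l⟩
  have hFinj : Function.Injective F := by
    intro l l' hll
    have hpp : p l = p l' := congrArg Subtype.val hll
    by_contra hne
    have hsub : l.1 ≠ l'.1 := fun h => hne (Subtype.ext h)
    have hz := hγ l.1 l'.1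
    rw [if_neg hsub, hg l, dot_single_left, hg l', hpp] at hz
    simp only [Pi.smul_apply, Pi.single_eq_same, smul_eq_mul, mul_one] at hz
    rcases mul_eq_zero.mp hz with h | h
    · exact hcne l (by simpa using congrArg (starRingEnd ℂ) h)
    · exact hcne l' h
  have hcard : Fintype.card {l : Fin n // l ≠ i0 ∧ l ≠ i1}
      = Fintype.card {l : Fin n // l ≠ j0 ∧ l ≠ k0} := by
    rw [card_ne_pair (Ne.symm hne01), card_ne_pair hjk0]
  refine ⟨Equiv.ofBijective F
    ((Fintype.bijective_iff_injective_and_card F).mpr ⟨hFinj, hcard⟩), ?_⟩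
  intro l
  exact ⟨c l, habs l, by rw [hg l]; rfl⟩

end RankInc

end helpers

open RankInc

/-- If the real span of the measurement functionals of two orthonormal bases
`ε` and `β` of `ℂⁿ` has dimension exactly `n + 1` (one more than that of a single
basis), then two of the `β`-vectors lie in the complex plane spanned by two of the
`ε`-vectors with all four mutual inner products nonzero, and the remaining
`β`-vectors agree, up to unimodular scalars, with a permutation of the remaining
`ε`-vectors. -/
theorem rank_increment_one_structure {n : ℕ} (ε β : Fin n → (Fin n → ℂ))
    (hε : ∀ i j, dotProduct (star (ε i)) (ε j) = if i = j then 1 else 0)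
    (hβ : ∀ i j, dotProduct (star (β i)) (β j) = if i = j then 1 else 0)
    (hrank : Module.finrank ℝ
      ↥(Submodule.span ℝ
        (Set.range (fun i => measFun (proj (ε i))) ∪
          Set.range (fun i => measFun (proj (β i))))) = n + 1) :
    ∃ r s : Fin n, r ≠ s ∧ ∃ j k : Fin n, j ≠ k ∧
      β r ∈ Submodule.span ℂ ({ε j, ε k} : Set (Fin n → ℂ)) ∧
      β s ∈ Submodule.span ℂ ({ε j, ε k} : Set (Fin n → ℂ)) ∧
      dotProduct (star (ε j)) (β r) ≠ 0 ∧
      dotProduct (star (ε k)) (β r) ≠ 0 ∧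
      dotProduct (star (ε j)) (β s) ≠ 0 ∧
      dotProduct (star (ε k)) (β s) ≠ 0 ∧
      ∃ σ : {l : Fin n // l ≠ r ∧ l ≠ s} ≃ {l : Fin n // l ≠ j ∧ l ≠ k},
        ∀ l : {l : Fin n // l ≠ r ∧ l ≠ s},
          ∃ c : ℂ, ‖c‖ = 1 ∧ β l.1 = c • ε (σ l).1 := by
  classical
  -- Step 1: transfer the rank hypothesis to the span of the projections.
  set s : Set (Matrix (Fin n) (Fin n) ℂ) :=
    Set.range (fun i => proj (ε i)) ∪ Set.range (fun i => proj (β i)) with hs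
  have hs_sa : ∀ M ∈ s, IsSelfAdjoint M := by
    rintro M (⟨i, rfl⟩ | ⟨i, rfl⟩) <;> exact proj_isSelfAdjoint _
  have himg : (measFunL n) '' s
      = Set.range (fun i => measFun (proj (ε i))) ∪
        Set.range (fun i => measFun (proj (β i))) := by
    rw [hs, Set.image_union, ← Set.range_comp, ← Set.range_comp]
    rfl
  have hrank2 : finrank ℝ (Submodule.span ℝ s) = n + 1 := by
    rw [← finrank_span_measFun hs_sa, himg, hrank]
  -- Step 2: conjugate by the unitary whose columns are the `ε i`.
  set U : Matrix (Fin n) (Fin n) ℂ := Matrix.of (fun j i => ε i j) with hUdef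
  have hU : Uᴴ * U = 1 := by
    ext i k
    have h := hε i k
    simp only [Matrix.mul_apply, conjTranspose_apply, hUdef, Matrix.of_apply,
      RCLike.star_def, Matrix.one_apply]
    rw [← h]
    simp [dotProduct]
  have hU' : U * Uᴴ = 1 := mul_eq_one_comm.mp hU
  set γ : Fin n → (Fin n → ℂ) := fun i => Uᴴ *ᵥ β i with hγdef
  have hUe : ∀ i, Uᴴ *ᵥ ε i = (Pi.single i 1 : Fin n → ℂ) := by
    intro i
    funext j
    have h := hε j i
    simp only [dotProduct, Pi.star_apply, RCLike.star_def] at h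
    simp only [Matrix.mulVec, dotProduct, conjTranspose_apply, hUdef,
      Matrix.of_apply, RCLike.star_def, Pi.single_apply]
    rw [h]
  have hUsingle : ∀ i, U *ᵥ (Pi.single i 1 : Fin n → ℂ) = ε i := by
    intro i
    funext j
    simp [Matrix.mulVec, dotProduct, hUdef, Pi.single_apply]
  have hUβ : ∀ i, U *ᵥ γ i = β i := by
    intro i
    rw [hγdef]
    rw [Matrix.mulVec_mulVec, hU', Matrix.one_mulVec]
  have hγo : ∀ i j, dotProduct (star (γ i)) (γ j) = if i = j then 1 else 0 := by
    intro i j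
    have h1 : star (γ i) ⬝ᵥ γ j = star (β i) ⬝ᵥ β j := by
      rw [hγdef]
      simp only
      rw [Matrix.star_mulVec, conjTranspose_conjTranspose,
        Matrix.dotProduct_mulVec, Matrix.vecMul_vecMul, hU', Matrix.vecMul_one]
    rw [h1, hβ i j]
  -- Step 3: transfer the rank along conjugation
  have hmap : Submodule.map ((conjEquiv hU : Matrix (Fin n) (Fin n) ℂ ≃ₗ[ℝ] _) :
        Matrix (Fin n) (Fin n) ℂ →ₗ[ℝ] Matrix (Fin n) (Fin n) ℂ) (Submodule.span ℝ s)
      = Submodule.span ℝ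
        (Set.range (fun i => proj ((Pi.single i 1 : Fin n → ℂ))) ∪
         Set.range (fun i => proj (γ i))) := by
    rw [Submodule.map_span]
    congr 1
    rw [hs, Set.image_union, ← Set.range_comp, ← Set.range_comp]
    congr 1
    · refine congrArg Set.range (funext fun i => ?_)
      show conjEquiv hU (proj (ε i)) = _
      rw [conjEquiv_apply, conj_proj, hUe]
    · refine congrArg Set.range (funext fun i => ?_)
      show conjEquiv hU (proj (β i)) = _
      rw [conjEquiv_apply, conj_proj]
  have hrank3 : finrank ℝ (Submodule.span ℝ
      (Set.range (fun i => proj ((Pi.single i 1 : Fin n → ℂ))) ∪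
       Set.range (fun i => proj (γ i)))) = n + 1 := by
    rw [← hmap, LinearEquiv.finrank_map_eq, hrank2]
  obtain ⟨r, s₀, hrs, j, k, hjk, hsr, hss, nz1, nz2, nz3, nz4, σ, hσ⟩ :=
    core γ hγo hrank3
  have hdot : ∀ i m, dotProduct (star (ε m)) (β i) = γ i m := by
    intro i m
    rw [hγdef]
    simp [Matrix.mulVec, dotProduct, conjTranspose_apply, hUdef,
      Pi.star_apply, RCLike.star_def]
  have hmemspan : ∀ i, (∀ m, m ≠ j → m ≠ k → γ i m = 0) →
      β i ∈ Submodule.span ℂ ({ε j, ε k} : Set (Fin n → ℂ)) := by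
    intro i hsupp
    have hdecomp : γ i = γ i j • (Pi.single j 1 : Fin n → ℂ)
        + γ i k • (Pi.single k 1 : Fin n → ℂ) := by
      funext m
      by_cases hmj : m = j
      · subst hmj
        simp [Pi.single_apply, Ne.symm hjk]
      · by_cases hmk : m = k
        · subst hmk
          simp [Pi.single_apply, hjk]
        · rw [hsupp m hmj hmk]
          simp [Pi.single_apply, hmj, hmk]
    have hb : β i = γ i j • ε j + γ i k • ε k := by
      have h3 := congrArg (fun v => U *ᵥ v) hdecomp
      rw [hUβ i, Matrix.mulVec_add, Matrix.mulVec_smul, Matrix.mulVec_smul,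
        hUsingle, hUsingle] at h3
      exact h3
    rw [hb]
    exact Submodule.add_mem _
      (Submodule.smul_mem _ _ (Submodule.subset_span (Set.mem_insert _ _)))
      (Submodule.smul_mem _ _ (Submodule.subset_span (Set.mem_insert_of_mem _ rfl)))
  refine ⟨r, s₀, hrs, j, k, hjk, hmemspan r hsr, hmemspan s₀ hss,
    ?_, ?_, ?_, ?_, σ, ?_⟩
  · rw [hdot]; exact nz1
  · rw [hdot]; exact nz2
  · rw [hdot]; exact nz3
  · rw [hdot]; exact nz4
  · intro l
    obtain ⟨c, habs, hgl⟩ := hσ l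
    refine ⟨c, habs, ?_⟩
    rw [← hUβ l.1, hgl, Matrix.mulVec_smul, hUsingle]
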